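/- arXiv:0909.0543 — 2 statements merged into one kernel-verified Lean document; each statement's English description precedes it below -/
import Mathlib

section
/- Let N ≥ 1, let λ₁,…,λ_N be distinct complex numbers, let Γ be an N×N complex matrix with zero diagonal, let U = diag(λ₁,…,λ_N), V = [Γ,U] = ΓU − UΓ, and let E_j be the N×N matrix with 1 in entry (j,j) and zeros elsewhere. Fix q ∈ ℂ. Then a vector-valued function φ = (φ₁,…,φ_N), depending on λ and on (λ₁,…,λ_N), satisfies dφ/dλ = −Σ_{j=1}^N (λ−λ_j)^{-1} E_j(V+qI) φ together with dφ/dλ_j = ((λ−λ_j)^{-1} E_j(V+qI) + [Γ,E_j]) φ for all j, if and only if it satisfies the three equations: (i) λ ∂φ_j/∂λ + Σ_k λ_k ∂φ_j/∂λ_k = −q φ_j; (ii) ∂φ_j/∂λ + Σ_k ∂φ_j/∂λ_k = 0; (iii) ∂φ_j/∂λ_k = Γ_{jk} φ_k for all j ≠ k. -/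
open Matrix BigOperators


lemma helper1 (N : ℕ) (lam : Fin N → ℂ) (Γ : Matrix (Fin N) (Fin N) ℂ) (q : ℂ)
    (φ : Fin N → ℂ) (j i : Fin N) :
    ((Matrix.single j j (1 : ℂ) *
          ((Γ * Matrix.diagonal lam - Matrix.diagonal lam * Γ) +
            q • (1 : Matrix (Fin N) (Fin N) ℂ))).mulVec φ) i
    = if i = j then (∑ k, (lam k - lam j) * Γ j k * φ k) + q * φ j else 0 := by
  simp only [Matrix.mulVec, dotProduct, Matrix.mul_apply, Matrix.single,
    Matrix.one_apply, Matrix.diagonal, Matrix.add_apply, Matrix.sub_apply, Matrix.smul_apply,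
    Matrix.of_apply, smul_eq_mul, ite_mul, mul_ite, one_mul, zero_mul, mul_zero, mul_one,
    Finset.sum_ite_eq, Finset.sum_ite_eq', Finset.mem_univ, if_true]
  by_cases h : i = j
  · subst h
    simp only [if_pos rfl, true_and, Finset.sum_ite_eq, Finset.mem_univ, if_true]
    rw [Finset.sum_congr rfl (fun x _ => add_mul _ _ _), Finset.sum_add_distrib]
    simp only [ite_mul, zero_mul, Finset.sum_ite_eq, Finset.mem_univ, if_true]
    congr 1
    exact Finset.sum_congr rfl (fun x _ => by ring)
  · simp [Ne.symm h, h]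

lemma helper2 (N : ℕ) (Γ : Matrix (Fin N) (Fin N) ℂ)
    (φ : Fin N → ℂ) (j i : Fin N) :
    ((Γ * Matrix.single j j (1 : ℂ) -
        Matrix.single j j (1 : ℂ) * Γ).mulVec φ) i
    = Γ i j * φ j - (if i = j then ∑ k, Γ j k * φ k else 0) := by
  simp only [Matrix.mulVec, dotProduct, Matrix.mul_apply, Matrix.single,
    Matrix.sub_apply, Matrix.of_apply, ite_mul, mul_ite, one_mul, zero_mul, mul_zero, mul_one,
    Finset.sum_ite_eq, Finset.sum_ite_eq', Finset.mem_univ, if_true]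
  by_cases h : i = j
  · subst h
    simp [Finset.sum_sub_distrib, sub_mul, ite_mul, Finset.sum_ite_eq, Finset.sum_ite_eq', ite_and]
  · simp [Ne.symm h, h, Finset.sum_sub_distrib, sub_mul, ite_mul, Finset.sum_ite_eq, ite_and]

lemma helperDz (N : ℕ) (lam : Fin N → ℂ) (z : ℂ) (Γ : Matrix (Fin N) (Fin N) ℂ) (q : ℂ)
    (φ : Fin N → ℂ) (i : Fin N) :
    ((-∑ j, (z - lam j)⁻¹ •
        (Matrix.single j j (1 : ℂ) *
          ((Γ * Matrix.diagonal lam - Matrix.diagonal lam * Γ) +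
            q • (1 : Matrix (Fin N) (Fin N) ℂ)))).mulVec φ) i
    = -((z - lam i)⁻¹ * ((∑ k, (lam k - lam i) * Γ i k * φ k) + q * φ i)) := by
  rw [Matrix.neg_mulVec]
  have : ((∑ j, (z - lam j)⁻¹ •
        (Matrix.single j j (1 : ℂ) *
          ((Γ * Matrix.diagonal lam - Matrix.diagonal lam * Γ) +
            q • (1 : Matrix (Fin N) (Fin N) ℂ)))).mulVec φ) i
      = ∑ j, (z - lam j)⁻¹ * (((Matrix.single j j (1 : ℂ) *
          ((Γ * Matrix.diagonal lam - Matrix.diagonal lam * Γ) +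
            q • (1 : Matrix (Fin N) (Fin N) ℂ)))).mulVec φ) i := by
    simp only [Matrix.mulVec, dotProduct, Matrix.sum_apply, Matrix.smul_apply,
      smul_eq_mul, Finset.sum_mul, Finset.mul_sum, mul_assoc]
    rw [Finset.sum_comm]
  rw [Pi.neg_apply, this]
  simp only [helper1, mul_ite, mul_zero, Finset.sum_ite_eq, Finset.mem_univ, if_true]

lemma helperDp (N : ℕ) (lam : Fin N → ℂ) (z : ℂ) (Γ : Matrix (Fin N) (Fin N) ℂ) (q : ℂ)
    (φ : Fin N → ℂ) (j i : Fin N) :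
    (((((z - lam j)⁻¹ •
            (Matrix.single j j (1 : ℂ) *
              ((Γ * Matrix.diagonal lam - Matrix.diagonal lam * Γ) +
                q • (1 : Matrix (Fin N) (Fin N) ℂ)))) +
          (Γ * Matrix.single j j (1 : ℂ) -
            Matrix.single j j (1 : ℂ) * Γ)).mulVec φ) i)
    = (if i = j then (z - lam j)⁻¹ * ((∑ k, (lam k - lam j) * Γ j k * φ k) + q * φ j)
          - (∑ k, Γ j k * φ k) else 0) + Γ i j * φ j := by
  rw [Matrix.add_mulVec, Matrix.smul_mulVec, Pi.add_apply, Pi.smul_apply,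
    helper1, helper2, smul_eq_mul]
  by_cases h : i = j
  · subst h; simp; ring
  · simp [h]

/-- The Fuchsian system together with the isomonodromic deformation equations for a
vector `φ` is equivalent to the three equations (Euler, unit, and Rauch-type). -/
theorem fuchsian_system_iff_euler_unit_rauch
    (N : ℕ) (hN : 1 ≤ N) (lam : Fin N → ℂ) (hinj : Function.Injective lam)
    (z : ℂ) (hz : ∀ j, z ≠ lam j)
    (Γ : Matrix (Fin N) (Fin N) ℂ) (hΓ : ∀ j, Γ j j = 0) (q : ℂ)
    (φ Dz : Fin N → ℂ) (Dp : Fin N → Fin N → ℂ) :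
    ((Dz = (-∑ j, (z - lam j)⁻¹ •
        (Matrix.single j j (1 : ℂ) *
          ((Γ * Matrix.diagonal lam - Matrix.diagonal lam * Γ) +
            q • (1 : Matrix (Fin N) (Fin N) ℂ)))).mulVec φ) ∧
      (∀ j, (fun i => Dp i j) =
        (((z - lam j)⁻¹ •
            (Matrix.single j j (1 : ℂ) *
              ((Γ * Matrix.diagonal lam - Matrix.diagonal lam * Γ) +
                q • (1 : Matrix (Fin N) (Fin N) ℂ)))) +
          (Γ * Matrix.single j j (1 : ℂ) -
            Matrix.single j j (1 : ℂ) * Γ)).mulVec φ))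
    ↔ ((∀ j, z * Dz j + ∑ k, lam k * Dp j k = -q * φ j) ∧
       (∀ j, Dz j + ∑ k, Dp j k = 0) ∧
       (∀ j k, j ≠ k → Dp j k = Γ j k * φ k)) := by
  have hzl : ∀ j, z - lam j ≠ 0 := fun j => sub_ne_zero.mpr (hz j)
  have hS : ∀ j : Fin N, (∑ k, (lam k - lam j) * Γ j k * φ k)
      = (∑ k, lam k * (Γ j k * φ k)) - lam j * ∑ k, Γ j k * φ k := by
    intro j
    rw [Finset.mul_sum, ← Finset.sum_sub_distrib]
    exact Finset.sum_congr rfl fun k _ => by ring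
  constructor
  · rintro ⟨h1, h2⟩
    have hDz : ∀ i, Dz i
        = -((z - lam i)⁻¹ * ((∑ k, (lam k - lam i) * Γ i k * φ k) + q * φ i)) := by
      intro i; rw [h1]; exact helperDz N lam z Γ q φ i
    have hDp : ∀ i j, Dp i j
        = (if i = j then (z - lam j)⁻¹ * ((∑ k, (lam k - lam j) * Γ j k * φ k) + q * φ j)
            - (∑ k, Γ j k * φ k) else 0) + Γ i j * φ j := by
      intro i j
      have := congrFun (h2 j) i
      rw [this]
      exact helperDp N lam z Γ q φ j i
    refine ⟨fun j => ?_, fun j => ?_, fun j k hjk => by simp [hDp j k, hjk]⟩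
    · have hsum : ∑ k, lam k * Dp j k
          = lam j * ((z - lam j)⁻¹ * ((∑ k, (lam k - lam j) * Γ j k * φ k) + q * φ j)
              - (∑ k, Γ j k * φ k)) + ∑ k, lam k * (Γ j k * φ k) := by
        rw [Finset.sum_congr rfl (fun k _ => by rw [hDp j k, mul_add]),
          Finset.sum_add_distrib]
        simp only [mul_ite, mul_zero, Finset.sum_ite_eq, Finset.mem_univ, if_true]
      rw [hsum, hDz j, hS j]
      linear_combination (-((∑ k, lam k * (Γ j k * φ k)) - lam j * (∑ k, Γ j k * φ k) + q * φ j)) * mul_inv_cancel₀ (hzl j)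
    · have hsum : ∑ k, Dp j k
          = ((z - lam j)⁻¹ * ((∑ k, (lam k - lam j) * Γ j k * φ k) + q * φ j)
              - (∑ k, Γ j k * φ k)) + ∑ k, Γ j k * φ k := by
        rw [Finset.sum_congr rfl (fun k _ => hDp j k), Finset.sum_add_distrib]
        simp only [Finset.sum_ite_eq, Finset.mem_univ, if_true]
      rw [hsum, hDz j]
      ring
  · rintro ⟨e1, e2, e3⟩
    have hsum : ∀ j, ∑ k, Dp j k = Dp j j + ∑ k, Γ j k * φ k := by
      intro j
      rw [Finset.sum_congr rfl (fun k (_ : k ∈ Finset.univ) =>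
        show Dp j k = (if j = k then Dp j j - Γ j k * φ k else 0) + Γ j k * φ k by
          by_cases h : j = k
          · subst h; simp
          · simp [h, e3 j k h]),
        Finset.sum_add_distrib]
      simp only [Finset.sum_ite_eq, Finset.mem_univ, if_true, hΓ j, zero_mul, sub_zero]
    have hlsum : ∀ j, ∑ k, lam k * Dp j k = lam j * Dp j j + ∑ k, lam k * (Γ j k * φ k) := by
      intro j
      rw [Finset.sum_congr rfl (fun k (_ : k ∈ Finset.univ) =>
        show lam k * Dp j k
            = (if j = k then lam k * Dp j j - lam k * (Γ j k * φ k) else 0)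
              + lam k * (Γ j k * φ k) by
          by_cases h : j = k
          · subst h; simp
          · simp [h, e3 j k h]),
        Finset.sum_add_distrib]
      simp only [Finset.sum_ite_eq, Finset.mem_univ, if_true, hΓ j, zero_mul, mul_zero, sub_zero]
    have hDpj : ∀ j, Dp j j
        = (z - lam j)⁻¹ * ((∑ k, (lam k - lam j) * Γ j k * φ k) + q * φ j)
          - ∑ k, Γ j k * φ k := by
      intro j
      have h1 := e1 j
      have h2 := e2 j
      rw [hlsum j] at h1
      rw [hsum j] at h2
      rw [hS j]
      linear_combination (z - lam j)⁻¹ * (z * h2 - h1) - (Dp j j + ∑ k, Γ j k * φ k) * mul_inv_cancel₀ (hzl j)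
    have hDzj : ∀ i, Dz i
        = -((z - lam i)⁻¹ * ((∑ k, (lam k - lam i) * Γ i k * φ k) + q * φ i)) := by
      intro i
      have h2 := e2 i
      rw [hsum i, hDpj i] at h2
      linear_combination h2
    constructor
    · funext i
      rw [helperDz N lam z Γ q φ i, hDzj i]
    · intro j
      funext i
      rw [helperDp N lam z Γ q φ j i]
      by_cases h : i = j
      · subst h; simp [hDpj i, hΓ i]
      · simp [h, e3 i j h]
end

section
/- With the notation of the Fuchsian system dΦ/dλ = −Σ_{j=1}^N (λ−λ_j)^{-1} E_j(V+qI) Φ, if Φ^q is a solution of the system with parameter q, then its λ-derivative ∂Φ^q/∂λ is a solution of the same system with parameter q+1. Equivalently, ∂Φ^q/∂λ = A^q(λ) Φ^q(λ) where A^q(λ) = −Σ_{j=1}^N (λ−λ_j)^{-1} E_j(V+qI), and A^{q+1}(λ) (A^q(λ)Φ^q) = ∂/∂λ (A^q(λ)Φ^q), provided Φ^q also satisfies the deformation equations ∂Φ^q/∂λ_j = ((λ−λ_j)^{-1}E_j(V+qI) + [Γ,E_j])Φ^q and Γ satisfies ∂Γ_{ij}/∂λ_k = Γ_{ik}Γ_{jk}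 for distinct i,j,k, Σ_k ∂Γ_{ij}/∂λ_k = 0, and Σ_k λ_k ∂Γ_{ij}/∂λ_k = −Γ_{ij}. -/
open Matrix BigOperators

/-- Entrywise form of multiplication by `-∑ l, (z - p l)⁻¹ • (E_l * M)`. -/
lemma entryf_aux {N : ℕ} (p : Fin N → ℂ) (z : ℂ) (M B : Matrix (Fin N) (Fin N) ℂ)
    (i j : Fin N) :
    ((-∑ l, (z - p l)⁻¹ • (Matrix.single l l (1:ℂ) * M)) * B) i j
      = -((z - p i)⁻¹ * ∑ k, M i k * B k j) := by
  simp [Matrix.mul_apply, Matrix.neg_apply, Matrix.sum_apply, Matrix.smul_apply,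
    Matrix.single, ite_and, Finset.mul_sum, Finset.sum_mul, mul_ite, ite_mul,
    mul_zero, zero_mul, Finset.sum_ite_eq, Finset.sum_ite_eq', mul_assoc]

/-- If `Φ` solves the Fuchsian system with parameter `q` together with the
isomonodromic deformation equations, and the rotation coefficients `Γ` satisfy the
Darboux–Egoroff equations together with the unit and Euler vector field conditions,
then the `λ`-derivative of `Φ` solves the Fuchsian system with parameter `q + 1`. -/
theorem deriv_solution_shifts_q
    (N : ℕ) (q : ℂ)
    (Γ : (Fin N → ℂ) → Matrix (Fin N) (Fin N) ℂ)
    (DΓ : (Fin N → ℂ) → Fin N → Matrix (Fin N) (Fin N) ℂ)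
    (Φ DΦz : ℂ → (Fin N → ℂ) → Matrix (Fin N) (Fin N) ℂ)
    (DΦp : ℂ → (Fin N → ℂ) → Fin N → Matrix (Fin N) (Fin N) ℂ)
    (hΓdiag : ∀ (p : Fin N → ℂ) i, Γ p i i = 0)
    (hDΓ : ∀ (p : Fin N → ℂ), Function.Injective p → ∀ k i j,
      HasDerivAt (fun t => Γ (Function.update p k t) i j) (DΓ p k i j) (p k))
    (hΓ1 : ∀ (p : Fin N → ℂ), Function.Injective p → ∀ i j k,
      i ≠ j → j ≠ k → i ≠ k → DΓ p k i j = Γ p i k * Γ p j k)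
    (hΓ2 : ∀ (p : Fin N → ℂ), Function.Injective p → ∀ i j, i ≠ j →
      ∑ k, DΓ p k i j = 0)
    (hΓ3 : ∀ (p : Fin N → ℂ), Function.Injective p → ∀ i j, i ≠ j →
      ∑ k, p k * DΓ p k i j = -Γ p i j)
    (hΦz : ∀ (z : ℂ) (p : Fin N → ℂ), (∀ j, z ≠ p j) → Function.Injective p →
      ∀ i j, HasDerivAt (fun t => Φ t p i j) (DΦz z p i j) z)
    (hΦp : ∀ (z : ℂ) (p : Fin N → ℂ), (∀ j, z ≠ p j) → Function.Injective p →
      ∀ k i j, HasDerivAt (fun t => Φ z (Function.update p k t) i j)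
        (DΦp z p k i j) (p k))
    (hsys : ∀ (z : ℂ) (p : Fin N → ℂ), (∀ j, z ≠ p j) → Function.Injective p →
      DΦz z p = (-∑ j, (z - p j)⁻¹ •
        (Matrix.single j j (1 : ℂ) *
          ((Γ p * Matrix.diagonal p - Matrix.diagonal p * Γ p) +
            q • (1 : Matrix (Fin N) (Fin N) ℂ)))) * Φ z p)
    (hdef : ∀ (z : ℂ) (p : Fin N → ℂ), (∀ j, z ≠ p j) → Function.Injective p →
      ∀ j, DΦp z p j =
        (((z - p j)⁻¹ •
          (Matrix.single j j (1 : ℂ) *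
            ((Γ p * Matrix.diagonal p - Matrix.diagonal p * Γ p) +
              q • (1 : Matrix (Fin N) (Fin N) ℂ)))) +
          (Γ p * Matrix.single j j (1 : ℂ) -
            Matrix.single j j (1 : ℂ) * Γ p)) * Φ z p) :
    ∀ (z : ℂ) (p : Fin N → ℂ), (∀ j, z ≠ p j) → Function.Injective p →
      ∀ i j, HasDerivAt (fun t => DΦz t p i j)
        (((-∑ l, (z - p l)⁻¹ •
          (Matrix.single l l (1 : ℂ) *
            ((Γ p * Matrix.diagonal p - Matrix.diagonal p * Γ p) +
              (q + 1) • (1 : Matrix (Fin N) (Fin N) ℂ)))) * DΦz z p) i j) z := by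
  intro z p hz hp i j
  set M : Matrix (Fin N) (Fin N) ℂ :=
    (Γ p * Matrix.diagonal p - Matrix.diagonal p * Γ p) + q • 1 with hM
  have hentry : ∀ t : ℂ, (∀ l, t ≠ p l) → ∀ a b : Fin N,
      DΦz t p a b = -((t - p a)⁻¹ * ∑ k, M a k * Φ t p k b) := by
    intro t ht a b
    rw [hsys t p ht hp, entryf_aux]
  have hev : (fun t => DΦz t p i j)
      =ᶠ[nhds z] fun t => -((t - p i)⁻¹ * ∑ k, M i k * Φ t p k j) := by
    have h1 : ∀ᶠ t in nhds z, ∀ l, t ≠ p l := by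
      rw [Filter.eventually_all]
      exact fun l => eventually_ne_nhds (hz l)
    exact h1.mono fun t ht => hentry t ht i j
  have hne : z - p i ≠ 0 := sub_ne_zero.mpr (hz i)
  have hS : HasDerivAt (fun t => ∑ k, M i k * Φ t p k j)
      (∑ k, M i k * DΦz z p k j) z :=
    HasDerivAt.fun_sum fun k _ => (hΦz z p hz hp k j).const_mul (M i k)
  have hInv : HasDerivAt (fun t => (t - p i)⁻¹) (-1 / (z - p i) ^ 2) z := by
    simpa using ((hasDerivAt_id z).sub_const (p i)).fun_inv hne
  have hD : HasDerivAt (fun t => DΦz t p i j)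
      (-((-1 / (z - p i) ^ 2) * (∑ k, M i k * Φ z p k j)
        + (z - p i)⁻¹ * ∑ k, M i k * DΦz z p k j)) z :=
    ((hInv.mul hS).neg).congr_of_eventuallyEq hev
  convert hD using 1
  have hM' : (Γ p * Matrix.diagonal p - Matrix.diagonal p * Γ p) +
      (q + 1) • (1 : Matrix (Fin N) (Fin N) ℂ) = M + 1 := by
    rw [hM, add_smul, one_smul, add_assoc]
  rw [hM', entryf_aux]
  have hsum : ∑ k, (M + 1) i k * DΦz z p k j
      = (∑ k, M i k * DΦz z p k j) + DΦz z p i j := by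
    simp [Matrix.add_apply, Matrix.one_apply, add_mul, Finset.sum_add_distrib,
      ite_mul, Finset.sum_ite_eq]
  rw [hsum, hentry z hz i j]
  field_simp
  ring
end
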